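/- Let J be a dynamical twist for U and let x : T → U be a function such that each x(λ) is invertible, of zero weight, and ε(x(λ)) = 1. Then Jˣ(λ) := Δ(x(λ)⁻¹)·J(λ)·(Σ_{μ∈T} x(λ+μ)⊗x(λ)P_μ) is also a dynamical twist for U. -/

import Mathlib

open TensorProduct

noncomputable section

namespace WHA

variable (k B : Type*) [Field k] [Ring B] [Algebra k B]

/-- `x ↦ x ⊗ 1`, the embedding of `B ⊗ B` into legs 1,2 of `B ⊗ B ⊗ B`. -/
def leg12 : B ⊗[k] B →ₗ[k] B ⊗[k] (B ⊗[k] B) :=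
  (TensorProduct.assoc k B B B).toLinearMap ∘ₗ (TensorProduct.mk k (B ⊗[k] B) B).flip 1

/-- `x ↦ 1 ⊗ x`, the embedding of `B ⊗ B` into legs 2,3 of `B ⊗ B ⊗ B`. -/
def leg23 : B ⊗[k] B →ₗ[k] B ⊗[k] (B ⊗[k] B) :=
  TensorProduct.mk k B (B ⊗[k] B) 1

/-- `a ⊗ b ↦ a ⊗ 1 ⊗ b`, the embedding of `B ⊗ B` into legs 1,3 of `B ⊗ B ⊗ B`. -/
def leg13 : B ⊗[k] B →ₗ[k] B ⊗[k] (B ⊗[k] B) :=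
  TensorProduct.map LinearMap.id (TensorProduct.mk k B B 1)

/-- `Δ ⊗ id`, landing in the right-associated triple tensor product. -/
def ext12 (Δ : B →ₗ[k] B ⊗[k] B) : B ⊗[k] B →ₗ[k] B ⊗[k] (B ⊗[k] B) :=
  (TensorProduct.assoc k B B B).toLinearMap ∘ₗ TensorProduct.map Δ LinearMap.id

/-- `id ⊗ Δ`. -/
def ext23 (Δ : B →ₗ[k] B ⊗[k] B) : B ⊗[k] B →ₗ[k] B ⊗[k] (B ⊗[k] B) :=
  TensorProduct.map LinearMap.id Δ

/-- `(ε ⊗ id)` composed with the canonical isomorphism `k ⊗ B ≅ B`. -/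
def epsL (ε : B →ₗ[k] k) : B ⊗[k] B →ₗ[k] B :=
  (TensorProduct.lid k B).toLinearMap ∘ₗ TensorProduct.map ε LinearMap.id

/-- `(id ⊗ ε)` composed with the canonical isomorphism `B ⊗ k ≅ B`. -/
def epsR (ε : B →ₗ[k] k) : B ⊗[k] B →ₗ[k] B :=
  (TensorProduct.rid k B).toLinearMap ∘ₗ TensorProduct.map LinearMap.id ε

/-- Pairing of two linear functionals against an element of `B ⊗ B`. -/
def pairF (φ ψ : B →ₗ[k] k) : B ⊗[k] B →ₗ[k] k :=
  (TensorProduct.lid k k).toLinearMap ∘ₗ TensorProduct.map φ ψ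

/-- The multiplication map `B ⊗ B → B`. -/
def mul2 : B ⊗[k] B →ₗ[k] B := LinearMap.mul' k B

end WHA

namespace DQG

variable (k : Type*) [Field k]
variable (T : Type*) [AddCommGroup T] [Fintype T] [DecidableEq T]
variable (U : Type*) [Ring U] [HopfAlgebra k U]

/-- The matrix units `E_{λμ}`. -/
def E (l m : T) : Matrix T T k := Matrix.single l m 1

/-- The `(λ,μ)` matrix entry, as a linear functional. -/
def entry (l m : T) : Matrix T T k →ₗ[k] k where
  toFun A := A l m
  map_add' _ _ := rfl
  map_smul' _ _ := rfl

/-- The comultiplication of `End_k(A)`: `Δ(E_{λμ}) = E_{λμ} ⊗ E_{λμ}`. -/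
def ΔM : Matrix T T k →ₗ[k] Matrix T T k ⊗[k] Matrix T T k :=
  ∑ l : T, ∑ m : T, (entry k T l m).smulRight (E k T l m ⊗ₜ[k] E k T l m)

/-- The counit of `End_k(A)`: `ε(E_{λμ}) = 1`. -/
def εM : Matrix T T k →ₗ[k] k := ∑ l : T, ∑ m : T, entry k T l m

/-- The antipode of `End_k(A)`: `S(E_{λμ}) = E_{μλ}`. -/
def SM : Matrix T T k →ₗ[k] Matrix T T k :=
  ∑ l : T, ∑ m : T, (entry k T l m).smulRight (E k T m l)

/-- The comultiplication of the tensor product weak Hopf algebra `H = End_k(A) ⊗ U`. -/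
def ΔH : (Matrix T T k ⊗[k] U) →ₗ[k] (Matrix T T k ⊗[k] U) ⊗[k] (Matrix T T k ⊗[k] U) :=
  (TensorProduct.tensorTensorTensorComm k (Matrix T T k) (Matrix T T k) U U).toLinearMap ∘ₗ
    TensorProduct.map (ΔM k T) Coalgebra.comul

/-- The counit of `H = End_k(A) ⊗ U`. -/
def εH : (Matrix T T k ⊗[k] U) →ₗ[k] k :=
  (TensorProduct.lid k k).toLinearMap ∘ₗ TensorProduct.map (εM k T) Coalgebra.counit

/-- The antipode of `H = End_k(A) ⊗ U`. -/
def SH : (Matrix T T k ⊗[k] U) →ₗ[k] (Matrix T T k ⊗[k] U) :=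
  TensorProduct.map (SM k T) (HopfAlgebra.antipode (R := k))

set_option maxHeartbeats 1000000 in
/-- The canonical ring structure on the triple tensor power of `H = End_k(A) ⊗ U`
(made explicit to help instance resolution). -/
instance triRing : Ring ((Matrix T T k ⊗[k] U) ⊗[k] ((Matrix T T k ⊗[k] U) ⊗[k] (Matrix T T k ⊗[k] U))) := by
  exact Algebra.TensorProduct.instRing (R := k) (A := Matrix T T k ⊗[k] U)
    (B := (Matrix T T k ⊗[k] U) ⊗[k] (Matrix T T k ⊗[k] U))

variable (P : T → U)

/-- The hypotheses on the system of idempotents `{P_μ}` spanning the abelian Hopf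
subalgebra `A ⊆ U`. -/
structure IsPSystem : Prop where
  orth : ∀ m n : T, P m * P n = if m = n then P m else 0
  sum_one : ∑ m : T, P m = 1
  comul_P : ∀ m : T, Coalgebra.comul (R := k) (P m) = ∑ n : T, P n ⊗ₜ[k] P (m - n)
  counit_P : ∀ m : T, Coalgebra.counit (R := k) (P m) = if m = 0 then (1 : k) else 0
  antipode_P : ∀ m : T, HopfAlgebra.antipode (R := k) (P m) = P (-m)

/-- The element `Θ = Σ_{λμ} E_{λ,λ+μ} ⊗ E_{λλ}P_μ` of `H ⊗ H`. -/
def Θ : (Matrix T T k ⊗[k] U) ⊗[k] (Matrix T T k ⊗[k] U) :=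
  ∑ l : T, ∑ m : T, ((E k T l (l + m)) ⊗ₜ[k] (1 : U)) ⊗ₜ[k] ((E k T l l) ⊗ₜ[k] P m)

/-- The element `Θ̄ = Σ_{λμ} E_{λ+μ,λ} ⊗ E_{λλ}P_μ` of `H ⊗ H`. -/
def Θbar : (Matrix T T k ⊗[k] U) ⊗[k] (Matrix T T k ⊗[k] U) :=
  ∑ l : T, ∑ m : T, ((E k T (l + m) l) ⊗ₜ[k] (1 : U)) ⊗ₜ[k] ((E k T l l) ⊗ₜ[k] P m)

/-- `u ⊗ v ↦ (E_{λλ} ⊗ u) ⊗ (E_{λλ} ⊗ v)`. -/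
def embAt (l : T) : U ⊗[k] U →ₗ[k] (Matrix T T k ⊗[k] U) ⊗[k] (Matrix T T k ⊗[k] U) :=
  TensorProduct.map (TensorProduct.mk k (Matrix T T k) U (E k T l l))
    (TensorProduct.mk k (Matrix T T k) U (E k T l l))

/-- The embedding `J ↦ Ĵ = Σ_λ E_{λλ}J⁽¹⁾(λ) ⊗ E_{λλ}J⁽²⁾(λ)` of a
`U ⊗ U`-valued function on `T` into `H ⊗ H`. -/
def emb (J : T → U ⊗[k] U) : (Matrix T T k ⊗[k] U) ⊗[k] (Matrix T T k ⊗[k] U) := ∑ l : T, embAt k T U l (J l)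

/-- `x = a ⊗ b ↦ a ⊗ b ⊗ P_μ ∈ U ⊗ U ⊗ U`. -/
def withP (m : T) : U ⊗[k] U →ₗ[k] U ⊗[k] (U ⊗[k] U) :=
  TensorProduct.map LinearMap.id ((TensorProduct.mk k U U).flip (P m))

/-- `x ↦ P_μ ⊗ x ∈ U ⊗ U ⊗ U`. -/
def withPleft (m : T) : U ⊗[k] U →ₗ[k] U ⊗[k] (U ⊗[k] U) :=
  TensorProduct.mk k U (U ⊗[k] U) (P m)

/-- `J` is a dynamical twist for `U`, with pointwise inverse `Jbar`. -/
structure IsDynTwist (J Jbar : T → U ⊗[k] U) : Prop where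
  inv_right : ∀ l : T, J l * Jbar l = 1
  inv_left : ∀ l : T, Jbar l * J l = 1
  zero_weight : ∀ l m : T,
    J l * Coalgebra.comul (R := k) (P m) = Coalgebra.comul (R := k) (P m) * J l
  counit_left : ∀ l : T, WHA.epsL k U Coalgebra.counit (J l) = 1
  counit_right : ∀ l : T, WHA.epsR k U Coalgebra.counit (J l) = 1
  dyn : ∀ l : T,
    WHA.ext12 k U Coalgebra.comul (J l) * (∑ m : T, withP k T U P m (J (l + m)))
      = WHA.ext23 k U Coalgebra.comul (J l) * WHA.leg23 k U (J l)

end DQG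

noncomputable section GaugeAux
namespace Gauge

variable {k : Type*} [Field k]

section Generic
variable {A B C : Type*} [Ring A] [Algebra k A] [Ring B] [Algebra k B] [Ring C] [Algebra k C]

lemma lmul_of_tmul (f : A ⊗[k] B →ₗ[k] C)
    (h : ∀ a a' b b', f ((a * a') ⊗ₜ[k] (b * b')) = f (a ⊗ₜ[k] b) * f (a' ⊗ₜ[k] b'))
    (X Y : A ⊗[k] B) : f (X * Y) = f X * f Y := by
  induction X using TensorProduct.induction_on with
  | zero => simp
  | tmul a b =>
    induction Y using TensorProduct.induction_on with
    | zero => simp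
    | tmul c d => rw [Algebra.TensorProduct.tmul_mul_tmul]; exact h a c b d
    | add y₁ y₂ h₁ h₂ => rw [mul_add, map_add, h₁, h₂, map_add, mul_add]
  | add x₁ x₂ h₁ h₂ => rw [add_mul, map_add, h₁, h₂, map_add, add_mul]

end Generic

variable {T : Type*} [AddCommGroup T] [Fintype T] [DecidableEq T]
variable {U : Type*} [Ring U] [HopfAlgebra k U]

lemma assoc_mul (p q : (U ⊗[k] U) ⊗[k] U) :
    (TensorProduct.assoc k U U U) (p * q)
      = (TensorProduct.assoc k U U U) p * (TensorProduct.assoc k U U U) q :=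
  map_mul (Algebra.TensorProduct.assoc k k k U U U) p q

lemma ext12_apply (y : U ⊗[k] U) : WHA.ext12 k U (Coalgebra.comul (R := k)) y
    = (TensorProduct.assoc k U U U) (TensorProduct.map Coalgebra.comul LinearMap.id y) := rfl

lemma ext23_tmul (a b : U) : WHA.ext23 k U (Coalgebra.comul (R := k)) (a ⊗ₜ[k] b)
    = a ⊗ₜ[k] (Coalgebra.comul (R := k) b) := by simp [WHA.ext23]

lemma leg23_apply (c : U ⊗[k] U) : WHA.leg23 k U c = (1 : U) ⊗ₜ[k] c := rfl

lemma ext12_mul (X Y : U ⊗[k] U) :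
    WHA.ext12 k U (Coalgebra.comul (R := k)) (X * Y)
      = WHA.ext12 k U Coalgebra.comul X * WHA.ext12 k U Coalgebra.comul Y := by
  refine lmul_of_tmul _ (fun a a' b b' => ?_) X Y
  rw [ext12_apply, ext12_apply, ext12_apply, TensorProduct.map_tmul, TensorProduct.map_tmul,
    TensorProduct.map_tmul]
  simp only [LinearMap.id_coe, id_eq, Bialgebra.comul_mul]
  rw [← Algebra.TensorProduct.tmul_mul_tmul, assoc_mul]

lemma ext23_mul (X Y : U ⊗[k] U) :
    WHA.ext23 k U (Coalgebra.comul (R := k)) (X * Y)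
      = WHA.ext23 k U Coalgebra.comul X * WHA.ext23 k U Coalgebra.comul Y := by
  refine lmul_of_tmul _ (fun a a' b b' => ?_) X Y
  rw [ext23_tmul, ext23_tmul, ext23_tmul, Bialgebra.comul_mul,
    Algebra.TensorProduct.tmul_mul_tmul]

lemma leg23_mul (X Y : U ⊗[k] U) :
    WHA.leg23 k U (X * Y) = WHA.leg23 k U X * WHA.leg23 k U Y := by
  rw [leg23_apply, leg23_apply, leg23_apply, Algebra.TensorProduct.tmul_mul_tmul, one_mul]

lemma epsL_tmul (a b : U) : WHA.epsL k U (Coalgebra.counit (R := k)) (a ⊗ₜ[k] b)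
    = Coalgebra.counit (R := k) a • b := by simp [WHA.epsL]

lemma epsR_tmul (a b : U) : WHA.epsR k U (Coalgebra.counit (R := k)) (a ⊗ₜ[k] b)
    = Coalgebra.counit (R := k) b • a := by simp [WHA.epsR]

lemma epsL_mul (X Y : U ⊗[k] U) :
    WHA.epsL k U (Coalgebra.counit (R := k)) (X * Y)
      = WHA.epsL k U Coalgebra.counit X * WHA.epsL k U Coalgebra.counit Y := by
  refine lmul_of_tmul _ (fun a a' b b' => ?_) X Y
  simp only [epsL_tmul, Bialgebra.counit_mul, smul_mul_assoc, mul_smul_comm, mul_smul]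
  rw [smul_comm]

lemma epsR_mul (X Y : U ⊗[k] U) :
    WHA.epsR k U (Coalgebra.counit (R := k)) (X * Y)
      = WHA.epsR k U Coalgebra.counit X * WHA.epsR k U Coalgebra.counit Y := by
  refine lmul_of_tmul _ (fun a a' b b' => ?_) X Y
  simp only [epsR_tmul, Bialgebra.counit_mul, smul_mul_assoc, mul_smul_comm, mul_smul]
  rw [smul_comm]

lemma epsL_comul (a : U) : WHA.epsL k U (Coalgebra.counit (R := k)) (Coalgebra.comul a) = a := by
  show (TensorProduct.lid k U) ((LinearMap.rTensor U (Coalgebra.counit (R := k)))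
    (Coalgebra.comul a)) = a
  rw [Coalgebra.rTensor_counit_comul, TensorProduct.lid_tmul, one_smul]

lemma epsR_comul (a : U) : WHA.epsR k U (Coalgebra.counit (R := k)) (Coalgebra.comul a) = a := by
  show (TensorProduct.rid k U) ((LinearMap.lTensor U (Coalgebra.counit (R := k)))
    (Coalgebra.comul a)) = a
  rw [Coalgebra.lTensor_counit_comul, TensorProduct.rid_tmul, one_smul]

lemma ext12_comul (a : U) :
    WHA.ext12 k U (Coalgebra.comul (R := k)) (Coalgebra.comul a)
      = WHA.ext23 k U Coalgebra.comul (Coalgebra.comul a) :=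
  Coalgebra.coassoc_apply a

section RingChainsOuter
variable {R : Type*} [Ring R]

lemma inv_chain (a b c d e f : R) (h1 : c * d = 1) (h2 : b * e = 1) (h3 : a * f = 1) :
    (a * b * c) * (d * (e * f)) = 1 := by
  have : (a * b * c) * (d * (e * f)) = a * ((b * ((c * d) * e)) * f) := by noncomm_ring
  rw [this, h1, one_mul, h2, one_mul, h3]

lemma inv_chain' (a b c d e f : R) (h1 : c * d = 1) (h2 : b * e = 1) (h3 : a * f = 1) :
    (a * (b * c)) * (d * e * f) = 1 := by
  have : (a * (b * c)) * (d * e * f) = a * ((b * ((c * d) * e)) * f) := by noncomm_ring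
  rw [this, h1, one_mul, h2, one_mul, h3]

lemma comm_chain (a b c p : R) (h1 : c * p = p * c) (h2 : b * p = p * b) (h3 : a * p = p * a) :
    (a * b * c) * p = p * (a * b * c) := by
  calc (a * b * c) * p = a * b * (c * p) := by noncomm_ring
    _ = a * b * (p * c) := by rw [h1]
    _ = a * (b * p) * c := by noncomm_ring
    _ = a * (p * b) * c := by rw [h2]
    _ = (a * p) * (b * c) := by noncomm_ring
    _ = (p * a) * (b * c) := by rw [h3]
    _ = p * (a * b * c) := by noncomm_ring

lemma final_chain (d j X A B C q e f g h i Rr : R)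
    (h2 : X * A = q) (h3 : q * B = B * q) (h4 : j * B = e * h)
    (h5 : f * g = Rr) (h6 : Rr * h = h * Rr) (h7 : Rr * i = q * C) :
    (d * j * X) * (A * B * C) = (d * e * f) * (g * h * i) := by
  have hL : (d * j * X) * (A * B * C) = d * ((e * h) * (q * C)) := by
    calc (d * j * X) * (A * B * C) = d * (j * (((X * A) * B) * C)) := by noncomm_ring
      _ = d * (j * ((q * B) * C)) := by rw [h2]
      _ = d * (j * ((B * q) * C)) := by rw [h3]
      _ = d * ((j * B) * (q * C)) := by noncomm_ring
      _ = d * ((e * h) * (q * C)) := by rw [h4]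
  have hR : (d * e * f) * (g * h * i) = d * ((e * h) * (q * C)) := by
    calc (d * e * f) * (g * h * i) = d * (e * (((f * g) * h) * i)) := by noncomm_ring
      _ = d * (e * ((Rr * h) * i)) := by rw [h5]
      _ = d * (e * ((h * Rr) * i)) := by rw [h6]
      _ = d * (e * (h * (Rr * i))) := by noncomm_ring
      _ = d * (e * (h * (q * C))) := by rw [h7]
      _ = d * ((e * h) * (q * C)) := by noncomm_ring
  rw [hL, hR]


end RingChainsOuter
section PSys
set_option synthInstance.maxHeartbeats 400000
set_option maxHeartbeats 1000000
variable {T : Type*} [AddCommGroup T] [Fintype T] [DecidableEq T]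
variable {U : Type*} [Ring U] [HopfAlgebra k U]
variable (P : T → U)

/-- The element `x(λ+h⁽²⁾) ⊗ x(λ)`. -/
def Xel (x : T → U) (l : T) : U ⊗[k] U := ∑ m : T, x (l + m) ⊗ₜ[k] (x l * P m)

lemma withP_apply (m : T) (c : U ⊗[k] U) :
    DQG.withP k T U P m c = (TensorProduct.assoc k U U U) (c ⊗ₜ[k] P m) := by
  induction c using TensorProduct.induction_on with
  | zero => simp
  | tmul a b => simp [DQG.withP]
  | add c₁ c₂ h₁ h₂ => rw [map_add, h₁, h₂, TensorProduct.add_tmul, map_add]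

variable (hP : DQG.IsPSystem k T U P)
include hP

lemma sumWithP_mul (f g : T → U ⊗[k] U) :
    (∑ m : T, DQG.withP k T U P m (f m)) * (∑ m : T, DQG.withP k T U P m (g m))
      = ∑ m : T, DQG.withP k T U P m (f m * g m) := by
  simp only [withP_apply]
  rw [← map_sum, ← map_sum, ← map_sum, ← assoc_mul]
  congr 1
  rw [Finset.sum_mul_sum]
  calc ∑ m : T, ∑ n : T, (f m ⊗ₜ[k] P m) * (g n ⊗ₜ[k] P n)
      = ∑ m : T, ∑ n : T, (if m = n then (f m * g n) ⊗ₜ[k] P m else 0) := by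
        refine Finset.sum_congr rfl fun m _ => Finset.sum_congr rfl fun n _ => ?_
        rw [Algebra.TensorProduct.tmul_mul_tmul, hP.orth, TensorProduct.tmul_ite]
    _ = ∑ m : T, (f m * g m) ⊗ₜ[k] P m := by
        refine Finset.sum_congr rfl fun m _ => ?_
        simp [Finset.sum_ite_eq]

lemma comulP_mul_Xel (x : T → U) (hxw : ∀ a b : T, x a * P b = P b * x a) (l m : T) :
    Coalgebra.comul (R := k) (P m) * Xel P x l
      = ∑ r : T, (x (l + (m - r)) * P r) ⊗ₜ[k] (x l * P (m - r)) := by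
  rw [hP.comul_P, Xel, Finset.sum_mul_sum]
  refine Finset.sum_congr rfl fun r _ => ?_
  calc ∑ n : T, (P r ⊗ₜ[k] P (m - r)) * (x (l + n) ⊗ₜ[k] (x l * P n))
      = ∑ n : T, (if m - r = n then (x (l + n) * P r) ⊗ₜ[k] (x l * P (m - r)) else 0) := by
        refine Finset.sum_congr rfl fun n _ => ?_
        rw [Algebra.TensorProduct.tmul_mul_tmul, ← hxw (l + n) r, ← mul_assoc, ← hxw l (m - r),
          mul_assoc, hP.orth, mul_ite, mul_zero, TensorProduct.tmul_ite]
    _ = (x (l + (m - r)) * P r) ⊗ₜ[k] (x l * P (m - r)) := by simp [Finset.sum_ite_eq]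

lemma Xel_mul_comulP (x : T → U) (hxw : ∀ a b : T, x a * P b = P b * x a) (l m : T) :
    Xel P x l * Coalgebra.comul (R := k) (P m)
      = ∑ r : T, (x (l + (m - r)) * P r) ⊗ₜ[k] (x l * P (m - r)) := by
  rw [hP.comul_P, Xel, Finset.sum_mul_sum]
  rw [show ∑ n : T, ∑ r : T, (x (l + n) ⊗ₜ[k] (x l * P n)) * (P r ⊗ₜ[k] P (m - r))
      = ∑ r : T, ∑ n : T, (x (l + n) ⊗ₜ[k] (x l * P n)) * (P r ⊗ₜ[k] P (m - r)) from
    Finset.sum_comm]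
  refine Finset.sum_congr rfl fun r _ => ?_
  calc ∑ n : T, (x (l + n) ⊗ₜ[k] (x l * P n)) * (P r ⊗ₜ[k] P (m - r))
      = ∑ n : T, (if n = m - r then (x (l + n) * P r) ⊗ₜ[k] (x l * P n) else 0) := by
        refine Finset.sum_congr rfl fun n _ => ?_
        rw [Algebra.TensorProduct.tmul_mul_tmul, mul_assoc, hP.orth, mul_ite, mul_zero,
          TensorProduct.tmul_ite]
    _ = (x (l + (m - r)) * P r) ⊗ₜ[k] (x l * P (m - r)) := by simp [Finset.sum_ite_eq']

lemma Xel_comm_comulP (x : T → U) (hxw : ∀ a b : T, x a * P b = P b * x a) (l m : T) :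
    Xel P x l * Coalgebra.comul (R := k) (P m)
      = Coalgebra.comul (R := k) (P m) * Xel P x l := by
  rw [Xel_mul_comulP P hP x hxw, comulP_mul_Xel P hP x hxw]

lemma Xel_mul_Xel (y z : T → U) (hyz : ∀ a : T, y a * z a = 1)
    (hzw : ∀ a b : T, z a * P b = P b * z a) (l : T) :
    Xel (k := k) P y l * Xel (k := k) P z l = 1 := by
  rw [Xel, Xel,
    Finset.sum_mul_sum Finset.univ Finset.univ (fun m : T => y (l + m) ⊗ₜ[k] (y l * P m))
      (fun n : T => z (l + n) ⊗ₜ[k] (z l * P n))]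
  calc ∑ m : T, ∑ n : T, (y (l + m) ⊗ₜ[k] (y l * P m)) * (z (l + n) ⊗ₜ[k] (z l * P n))
      = ∑ m : T, ∑ n : T, (if m = n then (y (l + m) * z (l + n)) ⊗ₜ[k] P m else 0) := by
        refine Finset.sum_congr rfl fun m _ => Finset.sum_congr rfl fun n _ => ?_
        rw [Algebra.TensorProduct.tmul_mul_tmul, mul_assoc, ← mul_assoc (P m), ← hzw,
          mul_assoc (z l), ← mul_assoc, hyz, one_mul, hP.orth, TensorProduct.tmul_ite]
    _ = ∑ m : T, (1 : U) ⊗ₜ[k] P m := by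
        refine Finset.sum_congr rfl fun m _ => ?_
        simp [Finset.sum_ite_eq, hyz]
    _ = 1 := by
        rw [← TensorProduct.tmul_sum, hP.sum_one, Algebra.TensorProduct.one_def]

lemma comul_collapse (y z : T → U) (hyz : ∀ a : T, y a * z a = 1) (c : U) (l : T) :
    (∑ m : T, (Coalgebra.comul (R := k) (y (l + m))) ⊗ₜ[k] (c * P m))
      * (∑ n : T, (Coalgebra.comul (R := k) (z (l + n))) ⊗ₜ[k] P n)
      = (1 : U ⊗[k] U) ⊗ₜ[k] c := by
  rw [Finset.sum_mul_sum Finset.univ Finset.univ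
    (fun m : T => (Coalgebra.comul (R := k) (y (l + m))) ⊗ₜ[k] (c * P m))
    (fun n : T => (Coalgebra.comul (R := k) (z (l + n))) ⊗ₜ[k] P n)]
  calc ∑ m : T, ∑ n : T,
        ((Coalgebra.comul (R := k) (y (l + m))) ⊗ₜ[k] (c * P m))
          * ((Coalgebra.comul (R := k) (z (l + n))) ⊗ₜ[k] P n)
      = ∑ m : T, ∑ n : T, (if m = n then
          (Coalgebra.comul (R := k) (y (l + m)) * Coalgebra.comul (R := k) (z (l + n)))
            ⊗ₜ[k] (c * P m) else 0) := by
        refine Finset.sum_congr rfl fun m _ => Finset.sum_congr rfl fun n _ => ?_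
        rw [Algebra.TensorProduct.tmul_mul_tmul, mul_assoc, hP.orth, mul_ite, mul_zero,
          TensorProduct.tmul_ite]
    _ = ∑ m : T, (1 : U ⊗[k] U) ⊗ₜ[k] (c * P m) := by
        refine Finset.sum_congr rfl fun m _ => ?_
        simp only [Finset.sum_ite_eq, Finset.mem_univ, if_true]
        rw [← Bialgebra.comul_mul, hyz, Bialgebra.comul_one]
    _ = (1 : U ⊗[k] U) ⊗ₜ[k] c := by
        rw [← TensorProduct.tmul_sum, ← Finset.mul_sum, hP.sum_one, mul_one]

lemma epsL_Xel (x : T → U) (hxε : ∀ a : T, Coalgebra.counit (R := k) (x a) = 1) (l : T) :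
    WHA.epsL k U Coalgebra.counit (Xel (k := k) P x l) = x l := by
  rw [Xel, map_sum]
  calc ∑ m : T, WHA.epsL k U Coalgebra.counit (x (l + m) ⊗ₜ[k] (x l * P m))
      = ∑ m : T, x l * P m := by
        refine Finset.sum_congr rfl fun m _ => ?_
        rw [epsL_tmul, hxε, one_smul]
    _ = x l := by rw [← Finset.mul_sum, hP.sum_one, mul_one]

lemma epsR_Xel (x : T → U) (hxε : ∀ a : T, Coalgebra.counit (R := k) (x a) = 1) (l : T) :
    WHA.epsR k U Coalgebra.counit (Xel (k := k) P x l) = x l := by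
  rw [Xel, map_sum]
  calc ∑ m : T, WHA.epsR k U Coalgebra.counit (x (l + m) ⊗ₜ[k] (x l * P m))
      = ∑ m : T, (if m = 0 then x (l + m) else 0) := by
        refine Finset.sum_congr rfl fun m _ => ?_
        rw [epsR_tmul, Bialgebra.counit_mul, hxε, one_mul, hP.counit_P, ite_smul, one_smul,
          zero_smul]
    _ = x l := by simp [Finset.sum_ite_eq']

omit hP in
lemma ext23_Xel (x : T → U) (l : T) :
    WHA.ext23 k U Coalgebra.comul (Xel (k := k) P x l)
      = ∑ m : T, x (l + m) ⊗ₜ[k] Coalgebra.comul (R := k) (x l * P m) := by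
  rw [Xel, map_sum]
  exact Finset.sum_congr rfl fun m _ => ext23_tmul _ _

omit hP in
lemma mapcomul_Xel (x : T → U) (l : T) :
    TensorProduct.map (Coalgebra.comul (R := k)) LinearMap.id (Xel (k := k) P x l)
      = ∑ m : T, (Coalgebra.comul (R := k) (x (l + m))) ⊗ₜ[k] (x l * P m) := by
  rw [Xel, map_sum]
  exact Finset.sum_congr rfl fun m _ => by rw [TensorProduct.map_tmul]; rfl



end PSys
end Gauge
end GaugeAux
set_option maxHeartbeats 1000000 in
set_option synthInstance.maxHeartbeats 200000 in
/-- a gauge transformation of a dynamical twist is a dynamical twist: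
`Jˣ(λ) = Δ(x(λ)⁻¹) J(λ) (x(λ+h⁽²⁾)⊗x(λ))`. -/
theorem gauge_of_dynamical_twist
    (k : Type*) [Field k]
    (T : Type*) [AddCommGroup T] [Fintype T] [DecidableEq T]
    (U : Type*) [Ring U] [HopfAlgebra k U]
    (P : T → U) (hP : DQG.IsPSystem k T U P)
    (J Jbar : T → U ⊗[k] U) (hJ : DQG.IsDynTwist k T U P J Jbar)
    (x xbar : T → U)
    (hxinv₁ : ∀ l : T, x l * xbar l = 1) (hxinv₂ : ∀ l : T, xbar l * x l = 1)
    (hxw : ∀ l m : T, x l * P m = P m * x l)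
    (hxε : ∀ l : T, Coalgebra.counit (R := k) (x l) = 1)
    (Jx : T → U ⊗[k] U)
    (hJx : ∀ l : T,
      Jx l = Coalgebra.comul (R := k) (xbar l) * J l *
        ∑ m : T, x (l + m) ⊗ₜ[k] (x l * P m)) :
    ∃ Jxbar : T → U ⊗[k] U, DQG.IsDynTwist k T U P Jx Jxbar := by
  classical
  have hxw' : ∀ a b : T, xbar a * P b = P b * xbar a := by
    intro a b
    have h1 : xbar a * (x a * P b) = P b := by rw [← mul_assoc, hxinv₂, one_mul]
    have h2 : (P b * x a) * xbar a = P b := by rw [mul_assoc, hxinv₁, mul_one]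
    calc xbar a * P b = xbar a * ((P b * x a) * xbar a) := by rw [h2]
      _ = (xbar a * (x a * P b)) * xbar a := by rw [← hxw, ← mul_assoc]
      _ = P b * xbar a := by rw [h1]
  have hJxl : ∀ l : T, Jx l
      = Coalgebra.comul (R := k) (xbar l) * J l * Gauge.Xel (k := k) P x l := fun l => hJx l
  refine ⟨fun l => Gauge.Xel (k := k) P xbar l
    * (Jbar l * Coalgebra.comul (R := k) (x l)), ?_, ?_, ?_, ?_, ?_, ?_⟩
  · -- inv_right
    intro l
    rw [hJxl l]
    exact Gauge.inv_chain _ _ _ _ _ _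
      (Gauge.Xel_mul_Xel P hP x xbar hxinv₁ hxw' l) (hJ.inv_right l)
      (show Coalgebra.comul (R := k) (xbar l) * Coalgebra.comul (R := k) (x l) = 1 by
        rw [← Bialgebra.comul_mul, hxinv₂, Bialgebra.comul_one])
  · -- inv_left
    intro l
    rw [hJxl l]
    exact Gauge.inv_chain' _ _ _ _ _ _
      (show Coalgebra.comul (R := k) (x l) * Coalgebra.comul (R := k) (xbar l) = 1 by
        rw [← Bialgebra.comul_mul, hxinv₁, Bialgebra.comul_one])
      (hJ.inv_left l)
      (Gauge.Xel_mul_Xel P hP xbar x hxinv₂ hxw l)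
  · -- zero weight
    intro l m
    rw [hJxl l]
    exact Gauge.comm_chain _ _ _ _
      (Gauge.Xel_comm_comulP P hP x hxw l m)
      (hJ.zero_weight l m)
      (show Coalgebra.comul (R := k) (xbar l) * Coalgebra.comul (R := k) (P m)
          = Coalgebra.comul (R := k) (P m) * Coalgebra.comul (R := k) (xbar l) by
        rw [← Bialgebra.comul_mul, ← Bialgebra.comul_mul, hxw'])
  · -- counit left
    intro l
    rw [hJxl l, Gauge.epsL_mul, Gauge.epsL_mul, Gauge.epsL_comul, hJ.counit_left, mul_one,
      Gauge.epsL_Xel P hP x hxε l, hxinv₂]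
  · -- counit right
    intro l
    rw [hJxl l, Gauge.epsR_mul, Gauge.epsR_mul, Gauge.epsR_comul, hJ.counit_right, mul_one,
      Gauge.epsR_Xel P hP x hxε l, hxinv₂]
  · -- dynamical twist equation
    intro l
    have hS1 : (∑ m : T, DQG.withP k T U P m (Coalgebra.comul (R := k) (xbar (l + m))))
        * (∑ m : T, DQG.withP k T U P m (J (l + m)))
        * (∑ m : T, DQG.withP k T U P m (Gauge.Xel (k := k) P x (l + m)))
        = ∑ m : T, DQG.withP k T U P m (Jx (l + m)) := by
      rw [Gauge.sumWithP_mul P hP, Gauge.sumWithP_mul P hP]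
      exact Finset.sum_congr rfl fun m _ => by rw [hJxl (l + m)]
    have hS2 : WHA.ext12 k U Coalgebra.comul (Gauge.Xel (k := k) P x l)
        * (∑ m : T, DQG.withP k T U P m (Coalgebra.comul (R := k) (xbar (l + m))))
        = (TensorProduct.assoc k U U U) ((1 : U ⊗[k] U) ⊗ₜ[k] x l) := by
      rw [Gauge.ext12_apply, Gauge.mapcomul_Xel]
      simp only [Gauge.withP_apply]
      rw [← map_sum, ← Gauge.assoc_mul]
      congr 1
      exact Gauge.comul_collapse P hP x xbar hxinv₁ (x l) l
    have hS3 : (TensorProduct.assoc k U U U) ((1 : U ⊗[k] U) ⊗ₜ[k] x l)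
        * (∑ m : T, DQG.withP k T U P m (J (l + m)))
        = (∑ m : T, DQG.withP k T U P m (J (l + m)))
        * (TensorProduct.assoc k U U U) ((1 : U ⊗[k] U) ⊗ₜ[k] x l) := by
      simp only [Gauge.withP_apply]
      rw [← map_sum, ← Gauge.assoc_mul, ← Gauge.assoc_mul]
      congr 1
      rw [Finset.mul_sum, Finset.sum_mul]
      refine Finset.sum_congr rfl fun m _ => ?_
      rw [Algebra.TensorProduct.tmul_mul_tmul, Algebra.TensorProduct.tmul_mul_tmul, one_mul,
        mul_one, hxw]
    have hS5 : WHA.ext23 k U Coalgebra.comul (Gauge.Xel (k := k) P x l)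
        * WHA.leg23 k U (Coalgebra.comul (R := k) (xbar l))
        = ∑ m : T, x (l + m) ⊗ₜ[k] Coalgebra.comul (R := k) (P m) := by
      rw [Gauge.ext23_Xel, Gauge.leg23_apply, Finset.sum_mul]
      refine Finset.sum_congr rfl fun m _ => ?_
      rw [Algebra.TensorProduct.tmul_mul_tmul, mul_one, ← Bialgebra.comul_mul,
        show (x l * P m) * xbar l = P m by rw [hxw, mul_assoc, hxinv₁, mul_one]]
    have hS6 : (∑ m : T, x (l + m) ⊗ₜ[k] Coalgebra.comul (R := k) (P m)) * WHA.leg23 k U (J l)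
        = WHA.leg23 k U (J l) * (∑ m : T, x (l + m) ⊗ₜ[k] Coalgebra.comul (R := k) (P m)) := by
      rw [Gauge.leg23_apply, Finset.sum_mul, Finset.mul_sum]
      refine Finset.sum_congr rfl fun m _ => ?_
      rw [Algebra.TensorProduct.tmul_mul_tmul, Algebra.TensorProduct.tmul_mul_tmul, one_mul,
        mul_one, hJ.zero_weight l m]
    have hS7 : (∑ m : T, x (l + m) ⊗ₜ[k] Coalgebra.comul (R := k) (P m))
        * WHA.leg23 k U (Gauge.Xel (k := k) P x l)
        = (TensorProduct.assoc k U U U) ((1 : U ⊗[k] U) ⊗ₜ[k] x l)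
        * (∑ m : T, DQG.withP k T U P m (Gauge.Xel (k := k) P x (l + m))) := by
      have hL : (∑ m : T, x (l + m) ⊗ₜ[k] Coalgebra.comul (R := k) (P m))
          * WHA.leg23 k U (Gauge.Xel (k := k) P x l)
          = ∑ m : T, ∑ r : T,
              x (l + m) ⊗ₜ[k] ((x (l + (m - r)) * P r) ⊗ₜ[k] (x l * P (m - r))) := by
        rw [Gauge.leg23_apply, Finset.sum_mul]
        refine Finset.sum_congr rfl fun m _ => ?_
        rw [Algebra.TensorProduct.tmul_mul_tmul, mul_one,
          Gauge.comulP_mul_Xel P hP x hxw l m, TensorProduct.tmul_sum]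
      have hR : (TensorProduct.assoc k U U U) ((1 : U ⊗[k] U) ⊗ₜ[k] x l)
          * (∑ m : T, DQG.withP k T U P m (Gauge.Xel (k := k) P x (l + m)))
          = ∑ m : T, ∑ n : T,
              x (l + m + n) ⊗ₜ[k] ((x (l + m) * P n) ⊗ₜ[k] (x l * P m)) := by
        simp only [Gauge.withP_apply]
        rw [← map_sum, ← Gauge.assoc_mul, Finset.mul_sum]
        simp only [Algebra.TensorProduct.tmul_mul_tmul, one_mul]
        rw [map_sum]
        refine Finset.sum_congr rfl fun m _ => ?_
        rw [Gauge.Xel, TensorProduct.sum_tmul, map_sum]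
        refine Finset.sum_congr rfl fun n _ => ?_
        rw [TensorProduct.assoc_tmul]
      rw [hL, hR,
        ← Finset.sum_product' (f := fun m r : T =>
          x (l + m) ⊗ₜ[k] ((x (l + (m - r)) * P r) ⊗ₜ[k] (x l * P (m - r)))),
        ← Finset.sum_product' (f := fun m n : T =>
          x (l + m + n) ⊗ₜ[k] ((x (l + m) * P n) ⊗ₜ[k] (x l * P m))),
        Finset.univ_product_univ]
      exact Fintype.sum_equiv
        ⟨fun p => (p.1 - p.2, p.2), fun p => (p.1 + p.2, p.2),
          fun p => by simp, fun p => by simp⟩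
        _ _ (fun p => by
          simp only [Equiv.coe_fn_mk]
          rw [show l + (p.1 - p.2) + p.2 = l + p.1 by abel])
    rw [hJxl l, ← hS1, Gauge.ext12_mul, Gauge.ext12_mul, Gauge.ext23_mul, Gauge.ext23_mul,
      Gauge.leg23_mul, Gauge.leg23_mul, Gauge.ext12_comul]
    exact Gauge.final_chain _ _ _ _ _ _ _ _ _ _ _ _ _ hS2 hS3 (hJ.dyn l) hS5 hS6 hS7
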